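/- Zero-query doubling k-center: the algorithm that starts with one point and, for k−1 rounds, adds for every current center the farthest point of its cluster, outputs exactly 2^{k-1} centers (since 1 + ∑_{i=0}^{k-2} 2^i = 2^{k-1}) and achieves max_{x∈X} d(x, C) ≤ 2·φ_OPT where φ_OPT is the optimal k-center cost. -/

import Mathlib

/-- distance of a point to a finite set of centers -/
noncomputable def dSet {X : Type*} [MetricSpace X] (x : X) (C : Finset X) : ℝ :=
  sInf ((fun c => dist x c) '' (C : Set X))

/-- k-center cost of a set of centers -/
noncomputable def kCenterCost {X : Type*} [MetricSpace X] [Fintype X] [Nonempty X]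
    (C : Finset X) : ℝ :=
  Finset.univ.sup' Finset.univ_nonempty (fun x => dSet x C)

/-- optimal k-center cost -/
noncomputable def kCenterOpt (X : Type*) [MetricSpace X] [Fintype X] [Nonempty X]
    (k : ℕ) : ℝ :=
  sInf {r | ∃ C : Finset X, C.card = k ∧ r = kCenterCost C}

lemma dSet_le {X : Type*} [MetricSpace X] {x c : X} {C : Finset X} (hc : c ∈ C) :
    dSet x C ≤ dist x c := by
  apply csInf_le
  · exact ⟨0, by rintro y ⟨c', _, rfl⟩; exact dist_nonneg⟩
  · exact ⟨c, hc, rfl⟩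

lemma exists_dSet_eq {X : Type*} [MetricSpace X] (x : X) {C : Finset X} (hC : C.Nonempty) :
    ∃ c ∈ C, dSet x C = dist x c := by
  have hfin : ((fun c => dist x c) '' (C : Set X)).Finite :=
    (C.finite_toSet).image _
  have hne : ((fun c => dist x c) '' (C : Set X)).Nonempty := by
    obtain ⟨c, hc⟩ := hC
    exact ⟨dist x c, c, hc, rfl⟩
  obtain ⟨c, hc, heq⟩ := hne.csInf_mem hfin
  exact ⟨c, hc, heq.symm⟩

lemma dSet_le_cost {X : Type*} [MetricSpace X] [Fintype X] [Nonempty X]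
    (x : X) (C : Finset X) : dSet x C ≤ kCenterCost C := by
  unfold kCenterCost
  exact Finset.le_sup' (fun y => dSet y C) (Finset.mem_univ x)

lemma key_cost {X : Type*} [MetricSpace X] [Fintype X] [Nonempty X] [DecidableEq X]
    (k : ℕ) (hk : 1 ≤ k)
    (x0 : X) (C : ℕ → Finset X) (f : ℕ → X → X)
    (hC0 : C 0 = {x0})
    (hstep : ∀ i, C (i + 1) = C i ∪ (C i).image (f i))
    (hf : ∀ i, ∀ c ∈ C i,
      (∀ c' ∈ C i, dist (f i c) c ≤ dist (f i c) c') ∧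
      ∀ x : X, (∀ c' ∈ C i, dist x c ≤ dist x c') → dist c x ≤ dist c (f i c))
    (Copt : Finset X) (hcard : Copt.card = k) :
    kCenterCost (C (k - 1)) ≤ 2 * kCenterCost Copt := by
  set φ := kCenterCost Copt with hφ
  have hCopt_ne : Copt.Nonempty := Finset.card_pos.mp (by omega)
  -- nearest optimal center
  have hgex : ∀ z : X, ∃ c, c ∈ Copt ∧ dist z c ≤ φ := by
    intro z
    obtain ⟨c, hc, heq⟩ := exists_dSet_eq z hCopt_ne
    exact ⟨c, hc, heq ▸ dSet_le_cost z Copt⟩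
  choose g hg1 hg2 using hgex
  -- monotonicity of C
  have hmono : ∀ i j, i ≤ j → C i ⊆ C j := by
    intro i j hij
    induction j with
    | zero => simp_all
    | succ j ih =>
      rcases Nat.lt_or_ge i (j+1) with h | h
      · exact (ih (by omega)).trans (by rw [hstep]; exact Finset.subset_union_left)
      · have : i = j + 1 := by omega
        subst this; exact Finset.Subset.refl _
  have hne : ∀ i, (C i).Nonempty := fun i => ⟨x0, hmono 0 i (Nat.zero_le _) (by simp [hC0])⟩
  by_contra hcon
  have hcost : (∀ z : X, ∃ c ∈ C (k-1), dist z c ≤ 2*φ) → kCenterCost (C (k-1)) ≤ 2*φ := by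
    intro h
    unfold kCenterCost
    apply Finset.sup'_le
    intro z _
    obtain ⟨c, hc, hd⟩ := h z
    exact le_trans (dSet_le hc) hd
  have hgrow : ∀ i, i ≤ k - 1 → i + 1 ≤ ((C i).image g).card := by
    intro i
    induction i with
    | zero =>
      intro _
      have : ((C 0).image g).Nonempty := (hne 0).image g
      simpa [Finset.card_pos] using Finset.card_pos.mpr this
    | succ i ih =>
      intro hle
      have ih' := ih (by omega)
      by_contra hc2
      push_neg at hc2
      have hsub' : C i ⊆ C (i+1) := by rw [hstep]; exact Finset.subset_union_left
      have himsub : (C i).image g ⊆ (C (i+1)).image g := Finset.image_subset_image hsub'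
      have heq : (C i).image g = (C (i+1)).image g :=
        Finset.eq_of_subset_of_card_le himsub (by omega)
      apply hcon
      apply hcost
      intro z
      obtain ⟨c, hcmem, hcmin⟩ := Finset.exists_min_image (C i) (fun c => dist z c) (hne i)
      obtain ⟨hw1, hw2⟩ := hf i c hcmem
      set w := f i c with hwdef
      have hwmem : w ∈ C (i+1) := by
        rw [hstep]
        exact Finset.mem_union_right _ (Finset.mem_image_of_mem _ hcmem)
      have : g w ∈ (C i).image g := by
        rw [heq]; exact Finset.mem_image_of_mem _ hwmem
      obtain ⟨c'', hc''mem, hgc''⟩ := Finset.mem_image.mp this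
      have h1 : dist w c'' ≤ 2*φ := by
        calc dist w c'' ≤ dist w (g w) + dist (g w) c'' := dist_triangle _ _ _
          _ ≤ φ + φ := by
              have := hg2 c''
              rw [hgc''] at this
              rw [dist_comm (g w) c'']
              exact add_le_add (hg2 w) this
          _ = 2*φ := by ring
      have h2 : dist w c ≤ dist w c'' := hw1 c'' hc''mem
      have h3 : dist c z ≤ dist c w := hw2 z hcmin
      refine ⟨c, hmono i (k-1) (by omega) hcmem, ?_⟩
      calc dist z c = dist c z := dist_comm _ _
        _ ≤ dist c w := h3
        _ = dist w c := dist_comm _ _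
        _ ≤ dist w c'' := h2
        _ ≤ 2*φ := h1
  -- final: surjectivity onto Copt
  have hfin := hgrow (k-1) le_rfl
  have himsub : (C (k-1)).image g ⊆ Copt := by
    intro y hy
    obtain ⟨c, _, rfl⟩ := Finset.mem_image.mp hy
    exact hg1 c
  have heq : (C (k-1)).image g = Copt :=
    Finset.eq_of_subset_of_card_le himsub (by omega)
  apply hcon
  apply hcost
  intro z
  have : g z ∈ (C (k-1)).image g := heq ▸ hg1 z
  obtain ⟨c0, hc0mem, hgc0⟩ := Finset.mem_image.mp this
  refine ⟨c0, hc0mem, ?_⟩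
  calc dist z c0 ≤ dist z (g z) + dist (g z) c0 := dist_triangle _ _ _
    _ ≤ φ + φ := by
        have := hg2 c0
        rw [hgc0] at this
        rw [dist_comm (g z) c0]
        exact add_le_add (hg2 z) this
    _ = 2*φ := by ring

theorem stmt_19 {X : Type*} [MetricSpace X] [Fintype X] [Nonempty X] [DecidableEq X]
    (k : ℕ) (hk : 1 ≤ k) (hX : 2 ^ (k - 1) ≤ Fintype.card X)
    (x0 : X) (C : ℕ → Finset X) (f : ℕ → X → X)
    (hC0 : C 0 = {x0})
    (hstep : ∀ i, C (i + 1) = C i ∪ (C i).image (f i))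
    (hf : ∀ i, ∀ c ∈ C i,
      (∀ c' ∈ C i, dist (f i c) c ≤ dist (f i c) c') ∧
      ∀ x : X, (∀ c' ∈ C i, dist x c ≤ dist x c') → dist c x ≤ dist c (f i c)) :
    (C (k - 1)).card ≤ 2 ^ (k - 1) ∧
      kCenterCost (C (k - 1)) ≤ 2 * kCenterOpt X k := by
  constructor
  · -- cardinality bound
    have : ∀ i, (C i).card ≤ 2 ^ i := by
      intro i
      induction i with
      | zero => simp [hC0]
      | succ i ih =>
        rw [hstep]
        calc (C i ∪ (C i).image (f i)).card ≤ (C i).card + ((C i).image (f i)).card :=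
              Finset.card_union_le _ _
          _ ≤ (C i).card + (C i).card := by
              exact Nat.add_le_add_left (Finset.card_image_le) _
          _ ≤ 2 ^ i + 2 ^ i := by omega
          _ = 2 ^ (i+1) := by ring
    exact this (k-1)
  · -- cost bound
    have hkle : k ≤ Fintype.card X := le_trans (by
      have := Nat.lt_two_pow_self (n := k-1)
      omega) hX
    obtain ⟨Copt, _, hCoptcard⟩ := Finset.exists_subset_card_eq (le_trans hkle (le_of_eq (Finset.card_univ (α := X)).symm) : k ≤ (Finset.univ (α := X)).card)
    have hSne : {r | ∃ D : Finset X, D.card = k ∧ r = kCenterCost D}.Nonempty :=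
      ⟨kCenterCost Copt, Copt, hCoptcard, rfl⟩
    have hlb : ∀ r ∈ {r | ∃ D : Finset X, D.card = k ∧ r = kCenterCost D},
        kCenterCost (C (k-1)) / 2 ≤ r := by
      rintro r ⟨D, hD, rfl⟩
      have := key_cost k hk x0 C f hC0 hstep hf D hD
      linarith
    have := le_csInf hSne hlb
    unfold kCenterOpt
    linarith
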